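/- arXiv:1201.4102 — 2 statements merged into one kernel-verified Lean document; each statement's English description precedes it below -/
import Mathlib

section
/- Let ψ(t) = (t, q_i(t), q_j(t), p^i(t)) be an integral curve of the dynamical vector field X of the unified formalism lying in W_L. Then the base curve φ(t) = (t, q_0(t)) satisfies the k-th order Euler–Lagrange equations: Σ_{i=0}^{k} (−1)^i (d^i/dt^i)[ (∂L/∂q_i)(t, q_0(t), q_0'(t), ..., q_0^{(k)}(t)) ] = 0. -/
/-! **Integral curves of the unified dynamics satisfy the higher-order
Euler–Lagrange equations.**

Let `L = L(t, q_0, …, q_k)` be smooth, and let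
`ψ(t) = (t, q_0(t), …, q_{2k-1}(t), p^0(t), …, p^{k-1}(t))` be an integral
curve of the dynamical semispray `X` lying in `W_L`; in coordinates:
`q_l' = q_{l+1}` (`0 ≤ l ≤ 2k-2`), `(p^0_A)' = ∂L̂/∂q_0^A`,
`(p^i_A)' = ∂L̂/∂q_i^A − p_A^{i-1}` (`1 ≤ i ≤ k-1`), together with the
Legendre–Ostrogradsky constraints (evaluated along the — holonomic — curve:
`p_A^{r-1}(t) = Σ_{i=0}^{k-r} (−1)^i (d/dt)^i[(∂L/∂q_{r+i}^A)(j^k q_0 (t))]`).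
Then the base curve `φ(t) = (t, q_0(t))` satisfies the `k`-th order
Euler–Lagrange equations
`Σ_{i=0}^{k} (−1)^i (d^i/dt^i)[(∂L/∂q_i^A)(j^k q_0(t))] = 0`. -/

variable (n k : ℕ)

abbrev Jk (n k : ℕ) := ℝ × (Fin (k + 1) → Fin n → ℝ)

/-- `∂L/∂q_i^A`. -/
noncomputable def pd (L : Jk n k → ℝ) (i : Fin (k + 1)) (A : Fin n)
    (x : Jk n k) : ℝ :=
  fderiv ℝ L x ((0 : ℝ), Pi.single i (Pi.single A (1 : ℝ)))

/-- The curve in `J^kπ` determined by the first `k+1` groups of `q`-coordinates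
of the curve `qc` in `J^{2k-1}π`. -/
def Jc (qc : ℝ → Fin (2 * k) → Fin n → ℝ) (t : ℝ) : Jk n k :=
  (t, fun i A => if h : i.1 < 2 * k then qc t ⟨i.1, h⟩ A else 0)

/-- **Euler–Lagrange equations from the unified formalism.** -/
theorem euler_lagrange_of_unified_integral_curve (hk : 1 ≤ k)
    (L : Jk n k → ℝ) (hL : ContDiff ℝ (⊤ : ℕ∞) L)
    (qc : ℝ → Fin (2 * k) → Fin n → ℝ) (pc : ℝ → Fin k → Fin n → ℝ)
    (hqc : ∀ (l : Fin (2 * k)) (A : Fin n), ContDiff ℝ (⊤ : ℕ∞) fun t => qc t l A)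
    (hpc : ∀ (i : Fin k) (A : Fin n), ContDiff ℝ (⊤ : ℕ∞) fun t => pc t i A)
    -- `q_l' = q_{l+1}` for `0 ≤ l ≤ 2k-2`:
    (hODEq : ∀ (t : ℝ) (l : ℕ) (h1 : l + 1 < 2 * k) (A : Fin n),
      HasDerivAt (fun s => qc s ⟨l, by omega⟩ A) (qc t ⟨l + 1, h1⟩ A) t)
    -- `(p^0_A)' = ∂L̂/∂q_0^A`:
    (hODEp0 : ∀ (t : ℝ) (A : Fin n),
      HasDerivAt (fun s => pc s ⟨0, by omega⟩ A)
        (pd n k L ⟨0, by omega⟩ A (Jc n k qc t)) t)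
    -- `(p^i_A)' = ∂L̂/∂q_i^A − p_A^{i-1}` for `1 ≤ i ≤ k-1`:
    (hODEpi : ∀ (t : ℝ) (i : ℕ) (h1 : 1 ≤ i) (h2 : i < k) (A : Fin n),
      HasDerivAt (fun s => pc s ⟨i, h2⟩ A)
        (pd n k L ⟨i, by omega⟩ A (Jc n k qc t) - pc t ⟨i - 1, by omega⟩ A) t)
    -- Legendre–Ostrogradsky constraints along the curve:
    (hconstr : ∀ (t : ℝ) (r : ℕ) (h1 : 1 ≤ r) (h2 : r ≤ k) (A : Fin n),
      pc t ⟨r - 1, by omega⟩ A =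
        ∑ i : Fin (k - r + 1), (-1 : ℝ) ^ (i : ℕ) *
          iteratedDeriv i
            (fun s => pd n k L ⟨r + i.1, by have := i.isLt; omega⟩ A
              (Jc n k qc s)) t) :
    -- conclusion: the `k`-th order Euler–Lagrange equations
    ∀ (t : ℝ) (A : Fin n),
      ∑ i : Fin (k + 1), (-1 : ℝ) ^ (i : ℕ) *
        iteratedDeriv i (fun s => pd n k L i A (Jc n k qc s)) t = 0 := by
  intro t A
  -- smoothness of the jet prolongation curve
  have hJc : ContDiff ℝ (⊤ : ℕ∞) (Jc n k qc) := by
    apply contDiff_id.prodMk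
    apply contDiff_pi.2; intro i
    apply contDiff_pi.2; intro B
    by_cases h : i.1 < 2 * k
    · simp only [dif_pos h]; exact hqc _ _
    · simp only [dif_neg h]; exact contDiff_const
  have hpd : ∀ (m : Fin (k+1)) (B : Fin n),
      ContDiff ℝ (⊤ : ℕ∞) (fun s => pd n k L m B (Jc n k qc s)) := by
    intro m B
    have h1 : ContDiff ℝ (⊤ : ℕ∞) (fun x : Jk n k => pd n k L m B x) := by
      unfold pd
      exact (ContinuousLinearMap.apply ℝ ℝ
        ((0 : ℝ), Pi.single m (Pi.single B (1 : ℝ)))).contDiff.comp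
        (hL.fderiv_right (m := (⊤ : ℕ∞)) le_rfl)
    exact h1.comp hJc
  -- the family of functions t ↦ ∂L/∂q_j (j^k q (t)) with ℕ index
  set F : ℕ → ℝ → ℝ := fun j s =>
    pd n k L ⟨min j k, by omega⟩ A (Jc n k qc s) with hFdef
  have hF : ∀ j, ContDiff ℝ (⊤ : ℕ∞) (F j) := fun j => hpd _ _
  have hFeq : ∀ (j : ℕ) (h : j < k + 1),
      F j = fun s => pd n k L ⟨j, h⟩ A (Jc n k qc s) := by
    intro j h
    show (fun s => pd n k L ⟨min j k, by omega⟩ A (Jc n k qc s)) = _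
    have hmk : (⟨min j k, by omega⟩ : Fin (k+1)) = ⟨j, h⟩ :=
      Fin.ext (min_eq_left (by omega))
    rw [hmk]
  -- derivative of iterated derivatives of smooth functions
  have key : ∀ (f : ℝ → ℝ), ContDiff ℝ (⊤ : ℕ∞) f → ∀ (i : ℕ) (s : ℝ),
      HasDerivAt (iteratedDeriv i f) (iteratedDeriv (i+1) f s) s := by
    intro f hf i s
    rw [iteratedDeriv_succ]
    have h1 : Differentiable ℝ (iteratedDeriv i f) := by
      rw [iteratedDeriv_eq_iterate]
      exact (hf.iterate_deriv i).differentiable (by simp)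
    exact (h1 s).hasDerivAt
  -- the r = 1 constraint, rewritten with F over a range sum
  have hP0 : ∀ t' : ℝ, pc t' ⟨0, by omega⟩ A =
      ∑ i ∈ Finset.range k, (-1 : ℝ)^i * iteratedDeriv i (F (i+1)) t' := by
    intro t'
    have h0 := hconstr t' 1 le_rfl hk A
    calc pc t' ⟨0, by omega⟩ A
        = ∑ i : Fin (k - 1 + 1), (-1 : ℝ) ^ (i : ℕ) *
            iteratedDeriv i (fun s => pd n k L ⟨1 + i.1, by have := i.isLt; omega⟩ A
              (Jc n k qc s)) t' := h0
      _ = ∑ i : Fin (k - 1 + 1),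
            (-1 : ℝ) ^ (i : ℕ) * iteratedDeriv i (F (i.1 + 1)) t' := by
          refine Finset.sum_congr rfl fun i _ => ?_
          have hi : i.1 + 1 < k + 1 := by have := i.isLt; omega
          have heq : (fun s => pd n k L ⟨1 + i.1, by have := i.isLt; omega⟩ A
              (Jc n k qc s)) = F (i.1 + 1) := by
            rw [hFeq (i.1+1) hi]
            have hmk : (⟨1 + i.1, by have := i.isLt; omega⟩ : Fin (k+1)) = ⟨i.1 + 1, hi⟩ :=
              Fin.ext (by simp [Nat.add_comm])
            rw [hmk]
          rw [heq]
      _ = ∑ j ∈ Finset.range (k - 1 + 1),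
            (-1 : ℝ)^j * iteratedDeriv j (F (j+1)) t' :=
          Fin.sum_univ_eq_sum_range (fun j => (-1 : ℝ)^j * iteratedDeriv j (F (j+1)) t') _
      _ = ∑ i ∈ Finset.range k, (-1 : ℝ)^i * iteratedDeriv i (F (i+1)) t' := by
          rw [show k - 1 + 1 = k from by omega]
  -- derivative of the right-hand side
  have hG : HasDerivAt
      (fun t' => ∑ i ∈ Finset.range k, (-1 : ℝ)^i * iteratedDeriv i (F (i+1)) t')
      (∑ i ∈ Finset.range k, (-1 : ℝ)^i * iteratedDeriv (i+1) (F (i+1)) t) t :=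
    HasDerivAt.fun_sum fun i _ => (key _ (hF _) i t).const_mul _
  -- p^0 equals the RHS, so their derivatives agree
  have hval : pd n k L ⟨0, by omega⟩ A (Jc n k qc t) =
      ∑ i ∈ Finset.range k, (-1 : ℝ)^i * iteratedDeriv (i+1) (F (i+1)) t := by
    have h1 := hODEp0 t A
    have h2 : (fun s => pc s ⟨0, by omega⟩ A) =
        fun t' => ∑ i ∈ Finset.range k, (-1 : ℝ)^i * iteratedDeriv i (F (i+1)) t' :=
      funext hP0
    rw [h2] at h1
    exact h1.unique hG
  -- assemble the Euler–Lagrange equation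
  have h4 : (-1 : ℝ)^(0:ℕ) * iteratedDeriv 0 (F 0) t =
      ∑ i ∈ Finset.range k, (-1 : ℝ)^i * iteratedDeriv (i+1) (F (i+1)) t := by
    rw [hFeq 0 (by omega)]
    simpa using hval
  have hmain : ∑ i : Fin (k + 1), (-1 : ℝ) ^ (i : ℕ) *
        iteratedDeriv i (fun s => pd n k L i A (Jc n k qc s)) t
      = ∑ j ∈ Finset.range (k+1), (-1 : ℝ)^j * iteratedDeriv j (F j) t := by
    rw [← Fin.sum_univ_eq_sum_range (fun j => (-1 : ℝ)^j * iteratedDeriv j (F j) t) (k+1)]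
    refine Finset.sum_congr rfl fun i _ => ?_
    show _ = (-1 : ℝ) ^ (i : ℕ) * iteratedDeriv (i : ℕ) (F i.1) t
    rw [hFeq i.1 i.isLt]
  rw [hmain, Finset.sum_range_succ']
  beta_reduce
  rw [h4, ← Finset.sum_add_distrib]
  exact Finset.sum_eq_zero fun i _ => by ring
end

section
/- (Integration-by-parts core of the higher-order variational principle.) For L = L(t, q_0,...,q_k) smooth and compactly supported variation δ: ℝ → ℝ^n smooth, d/ds|_{s=0} ∫_ℝ L(t, (q+sδ)(t), (q+sδ)'(t), ..., (q+sδ)^{(k)}(t)) dt = ∫_ℝ ⟨ Σ_{i=0}^{k} (−1)^i (d/dt)^i (∂L/∂q_i ∘ j^k q)(t), δ(t) ⟩ dt. Consequently, a smooth curve q is a critical point of the action under all compactly supported variations iff it satisfies the k-th order Euler–Lagrange equations Σ_{i=0}^{k}(−1)^i(d/dt)^i(∂L/∂q_i ∘ j^k q) = 0. -/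
open MeasureTheory

/-! **The integration-by-parts core of the higher-order variational
principle, and the higher-order Euler–Lagrange equations.**

`L : ℝ × (ℝ^n)^{k+1} → ℝ` smooth, `q : ℝ → ℝ^n` smooth with
`j^k q (t) = (t, q(t), q'(t), …, q^{(k)}(t))`, and `δ : ℝ → ℝ^n` smooth with
compact support.  Assuming the action integral converges (the base integrand
`L ∘ j^k q` is integrable), one has
`d/ds|₀ ∫ L(j^k(q + sδ)(t)) dt
  = ∫ ⟨Σ_{i=0}^k (−1)^i (d/dt)^i (∂L/∂q_i ∘ j^k q)(t), δ(t)⟩ dt`,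
and consequently `q` is critical under all compactly supported variations iff
it satisfies the `k`-th order Euler–Lagrange equations. -/

variable (n k : ℕ)

/-- The `k`-jet prolongation of a curve. -/
noncomputable def jet (c : ℝ → Fin n → ℝ) (t : ℝ) : Jk n k :=
  (t, fun i A => iteratedDeriv i.1 (fun s => c s A) t)

/-- The Euler–Lagrange expression
`Σ_{i=0}^k (−1)^i (d/dt)^i (∂L/∂q_i^A ∘ j^k q)(t)`. -/
noncomputable def ELexpr (L : Jk n k → ℝ) (q : ℝ → Fin n → ℝ) (t : ℝ)
    (A : Fin n) : ℝ :=
  ∑ i : Fin (k + 1), (-1 : ℝ) ^ (i : ℕ) *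
    iteratedDeriv i.1 (fun s => pd n k L i A (jet n k q s)) t

section AuxLemmas

lemma one_le_inf' : (1 : WithTop ℕ∞) ≤ ((⊤ : ℕ∞) : WithTop ℕ∞) := by exact_mod_cast le_top

lemma contDiff_iteratedDeriv_top {f : ℝ → ℝ} (hf : ContDiff ℝ (⊤ : ℕ∞) f) (i : ℕ) :
    ContDiff ℝ (⊤ : ℕ∞) (iteratedDeriv i f) := by
  rw [iteratedDeriv_eq_iterate]
  exact ContDiff.iterate_deriv i hf

lemma tsupport_iteratedDeriv_subset (f : ℝ → ℝ) (i : ℕ) :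
    tsupport (iteratedDeriv i f) ⊆ tsupport f := by
  rw [iteratedDeriv_eq_iterate]
  induction i with
  | zero => simp [Function.iterate_zero]
  | succ i ih =>
    rw [Function.iterate_succ_apply']
    exact (closure_minimal support_deriv_subset isClosed_closure).trans ih

lemma hasCompactSupport_iteratedDeriv {f : ℝ → ℝ} (hf : HasCompactSupport f) (i : ℕ) :
    HasCompactSupport (iteratedDeriv i f) :=
  hf.mono' ((subset_tsupport _).trans (tsupport_iteratedDeriv_subset f i))

lemma integral_deriv_eq_zero' {f : ℝ → ℝ} (hf : ContDiff ℝ (⊤ : ℕ∞) f)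
    (hfc : HasCompactSupport f) : ∫ t : ℝ, deriv f t = 0 := by
  have h1 : ContDiff ℝ 1 f := hf.of_le (by exact_mod_cast le_top)
  have hint : Integrable (deriv f) :=
    (hf.continuous_deriv one_le_inf').integrable_of_hasCompactSupport hfc.deriv
  rw [← intervalIntegral.integral_Iic_add_Ioi (b := 0) hint.integrableOn hint.integrableOn,
    HasCompactSupport.integral_Iic_deriv_eq h1 hfc 0,
    HasCompactSupport.integral_Ioi_deriv_eq h1 hfc 0]
  ring

lemma ibp_one {f g : ℝ → ℝ} (hf : ContDiff ℝ (⊤ : ℕ∞) f) (hg : ContDiff ℝ (⊤ : ℕ∞) g)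
    (hgc : HasCompactSupport g) :
    ∫ t : ℝ, f t * deriv g t = - ∫ t : ℝ, deriv f t * g t := by
  have hfg : HasCompactSupport (fun t => f t * g t) := hgc.mul_left
  have hd : ∀ t, deriv (fun t => f t * g t) t = deriv f t * g t + f t * deriv g t := by
    intro t
    exact deriv_fun_mul ((hf.differentiable (by simp)).differentiableAt)
      ((hg.differentiable (by simp)).differentiableAt)
  have hz : ∫ t : ℝ, (deriv f t * g t + f t * deriv g t) = 0 := by
    rw [show (fun t => deriv f t * g t + f t * deriv g t) = deriv (fun t => f t * g t) by
      funext t; rw [hd t]]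
    exact integral_deriv_eq_zero' (hf.mul hg) hfg
  have i1 : Integrable (fun t => deriv f t * g t) :=
    ((hf.continuous_deriv one_le_inf').mul hg.continuous).integrable_of_hasCompactSupport
      hgc.mul_left
  have i2 : Integrable (fun t => f t * deriv g t) :=
    (hf.continuous.mul (hg.continuous_deriv one_le_inf')).integrable_of_hasCompactSupport
      hgc.deriv.mul_left
  rw [integral_add i1 i2] at hz
  linarith

lemma ibp_iter {f : ℝ → ℝ} (hf : ContDiff ℝ (⊤ : ℕ∞) f) (i : ℕ) :
    ∀ {g : ℝ → ℝ}, ContDiff ℝ (⊤ : ℕ∞) g → HasCompactSupport g →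
    ∫ t : ℝ, f t * iteratedDeriv i g t
      = (-1 : ℝ) ^ i * ∫ t : ℝ, iteratedDeriv i f t * g t := by
  induction i with
  | zero => intro g _ _; simp [iteratedDeriv_zero]
  | succ i ih =>
    intro g hg hgc
    have hdg : ContDiff ℝ (⊤ : ℕ∞) (deriv g) := by
      have := contDiff_iteratedDeriv_top hg 1
      simpa [iteratedDeriv_one] using this
    calc ∫ t : ℝ, f t * iteratedDeriv (i + 1) g t
        = ∫ t : ℝ, f t * iteratedDeriv i (deriv g) t := by
          simp_rw [iteratedDeriv_succ']
      _ = (-1 : ℝ) ^ i * ∫ t : ℝ, iteratedDeriv i f t * deriv g t := ih hdg hgc.deriv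
      _ = (-1 : ℝ) ^ i * - ∫ t : ℝ, deriv (iteratedDeriv i f) t * g t := by
          rw [ibp_one (contDiff_iteratedDeriv_top hf i) hg hgc]
      _ = (-1 : ℝ) ^ (i + 1) * ∫ t : ℝ, iteratedDeriv (i + 1) f t * g t := by
          simp_rw [iteratedDeriv_succ]; ring

lemma fundamental_lemma {f : ℝ → ℝ} (hf : Continuous f)
    (h : ∀ g : ℝ → ℝ, ContDiff ℝ (⊤ : ℕ∞) g → HasCompactSupport g →
      ∫ t : ℝ, f t * g t = 0) : ∀ t, f t = 0 := by
  have hae : ∀ᵐ t : ℝ, f t = 0 := by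
    apply ae_eq_zero_of_integral_contDiff_smul_eq_zero hf.locallyIntegrable
    intro g hg hgc
    simpa [smul_eq_mul, mul_comm] using h g hg hgc
  have := (Continuous.ae_eq_iff_eq volume hf continuous_const).mp hae
  exact fun t => congrFun this t

lemma iteratedDeriv_add_const_mul {f g : ℝ → ℝ} (hf : ContDiff ℝ (⊤ : ℕ∞) f)
    (hg : ContDiff ℝ (⊤ : ℕ∞) g) (c : ℝ) (i : ℕ) :
    iteratedDeriv i (fun u => f u + c * g u)
      = fun t => iteratedDeriv i f t + c * iteratedDeriv i g t := by
  induction i with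
  | zero => simp [iteratedDeriv_zero]
  | succ i ih =>
    rw [iteratedDeriv_succ, iteratedDeriv_succ, iteratedDeriv_succ, ih]
    funext t
    have h1 : DifferentiableAt ℝ (iteratedDeriv i f) t :=
      ((contDiff_iteratedDeriv_top hf i).differentiable (by simp)).differentiableAt
    have h2 : DifferentiableAt ℝ (iteratedDeriv i g) t :=
      ((contDiff_iteratedDeriv_top hg i).differentiable (by simp)).differentiableAt
    rw [deriv_fun_add h1 (h2.const_mul c), deriv_const_mul c h2]

lemma single_decomp (v : Fin (k + 1) → Fin n → ℝ) :
    (((0 : ℝ), v) : Jk n k)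
      = ∑ i : Fin (k + 1), ∑ A : Fin n,
          v i A • (((0 : ℝ), Pi.single i (Pi.single A (1 : ℝ))) : Jk n k) := by
  apply Prod.ext
  · simp [Prod.fst_sum]
  · simp only [Prod.snd_sum, Prod.smul_mk]
    funext j B
    simp [Finset.sum_apply, apply_ite (fun f : Fin n → ℝ => f B), Pi.single_apply,
      smul_eq_mul, Finset.sum_ite_eq, Finset.sum_ite_eq', eq_comm]

lemma fderiv_decomp (L : Jk n k → ℝ) (x : Jk n k)
    (v : Fin (k + 1) → Fin n → ℝ) :
    fderiv ℝ L x ((0 : ℝ), v) = ∑ i : Fin (k + 1), ∑ A : Fin n, v i A * pd n k L i A x := by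
  rw [single_decomp, map_sum]
  refine Finset.sum_congr rfl fun i _ => ?_
  rw [map_sum]
  refine Finset.sum_congr rfl fun A _ => ?_
  rw [_root_.map_smul]
  simp [pd, smul_eq_mul]

lemma contDiff_jet {q : ℝ → Fin n → ℝ} (hq : ContDiff ℝ (⊤ : ℕ∞) q) :
    ContDiff ℝ (⊤ : ℕ∞) (jet n k q) := by
  unfold jet
  exact contDiff_id.prodMk (contDiff_pi.2 fun i => contDiff_pi.2 fun A =>
    contDiff_iteratedDeriv_top (contDiff_pi.1 hq A) i.1)

lemma contDiff_pd (L : Jk n k → ℝ) (hL : ContDiff ℝ (⊤ : ℕ∞) L) (i : Fin (k + 1)) (A : Fin n) :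
    ContDiff ℝ (⊤ : ℕ∞) (pd n k L i A) := by
  unfold pd
  exact (hL.fderiv_right (by exact_mod_cast le_top)).clm_apply contDiff_const

lemma jet_add_smul {q δ : ℝ → Fin n → ℝ} (hq : ContDiff ℝ (⊤ : ℕ∞) q)
    (hδ : ContDiff ℝ (⊤ : ℕ∞) δ) (s t : ℝ) :
    jet n k (fun u => q u + s • δ u) t
      = jet n k q t + s • (((0 : ℝ),
          fun i A => iteratedDeriv i.1 (fun u => δ u A) t) : Jk n k) := by
  unfold jet
  simp only [Prod.smul_mk, Prod.mk_add_mk, smul_zero, add_zero]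
  refine Prod.ext rfl ?_
  funext i A
  have := congrFun (iteratedDeriv_add_const_mul (contDiff_pi.1 hq A) (contDiff_pi.1 hδ A) s i.1) t
  simp only [Pi.add_apply, Pi.smul_apply, smul_eq_mul] at this ⊢
  exact this

end AuxLemmas

/-- **First variation formula and the higher-order Euler–Lagrange
equations.** -/
theorem first_variation_and_euler_lagrange
    (L : Jk n k → ℝ) (hL : ContDiff ℝ (⊤ : ℕ∞) L)
    (q : ℝ → Fin n → ℝ) (hq : ContDiff ℝ (⊤ : ℕ∞) q)
    (hInt : Integrable (fun t : ℝ => L (jet n k q t))) :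
    -- first variation = integrated Euler–Lagrange expression against `δ`
    (∀ δ : ℝ → Fin n → ℝ, ContDiff ℝ (⊤ : ℕ∞) δ → HasCompactSupport δ →
      HasDerivAt
        (fun s : ℝ => ∫ t : ℝ, L (jet n k (fun u => q u + s • δ u) t))
        (∫ t : ℝ, ∑ A : Fin n, ELexpr n k L q t A * δ t A) 0) ∧
    -- criticality under all compactly supported variations ↔ Euler–Lagrange
    ((∀ δ : ℝ → Fin n → ℝ, ContDiff ℝ (⊤ : ℕ∞) δ → HasCompactSupport δ →
        HasDerivAt
          (fun s : ℝ => ∫ t : ℝ, L (jet n k (fun u => q u + s • δ u) t)) 0 0)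
      ↔ (∀ (t : ℝ) (A : Fin n), ELexpr n k L q t A = 0)) := by
  have hjet := contDiff_jet n k hq
  have hΦ : ∀ (i : Fin (k + 1)) (A : Fin n),
      ContDiff ℝ (⊤ : ℕ∞) (fun s => pd n k L i A (jet n k q s)) :=
    fun i A => (contDiff_pd n k L hL i A).comp hjet
  have hELc : ∀ A, Continuous (fun t => ELexpr n k L q t A) := by
    intro A
    unfold ELexpr
    exact continuous_finset_sum _ fun i _ =>
      continuous_const.mul (contDiff_iteratedDeriv_top (hΦ i A) i.1).continuous
  have key : ∀ δ : ℝ → Fin n → ℝ, ContDiff ℝ (⊤ : ℕ∞) δ → HasCompactSupport δ →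
      HasDerivAt (fun s : ℝ => ∫ t : ℝ, L (jet n k (fun u => q u + s • δ u) t))
        (∫ t : ℝ, ∑ A : Fin n, ELexpr n k L q t A * δ t A) 0 := by
    intro δ hδ hδc
    set D : ℝ → Jk n k :=
      fun t => ((0 : ℝ), fun i A => iteratedDeriv i.1 (fun u => δ u A) t) with hD
    have hδA : ∀ A, ContDiff ℝ (⊤ : ℕ∞) (fun u => δ u A) := fun A => contDiff_pi.1 hδ A
    have hδAc : ∀ A, HasCompactSupport (fun u => δ u A) := by
      intro A
      refine hδc.mono' fun u hu => subset_tsupport δ ?_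
      simp only [Function.mem_support] at hu ⊢
      exact fun h0 => hu (by simpa using congrFun h0 A)
    have hDcont : Continuous D :=
      continuous_const.prodMk (continuous_pi fun i => continuous_pi fun A =>
        (contDiff_iteratedDeriv_top (hδA A) i.1).continuous)
    have hD0 : ∀ t ∉ tsupport δ, D t = 0 := by
      intro t ht
      have hz : ∀ (i : Fin (k + 1)) (A : Fin n), iteratedDeriv i.1 (fun u => δ u A) t = 0 := by
        intro i A
        apply image_eq_zero_of_notMem_tsupport
        intro hmem
        refine ht ((tsupport_iteratedDeriv_subset _ i.1).trans ?_ hmem)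
        exact closure_mono fun u hu h0 => hu (by simpa using congrFun h0 A)
      rw [hD]
      refine Prod.ext rfl ?_
      funext i A
      simpa using hz i A
    have hF'cont : Continuous
        (fun p : ℝ × ℝ => fderiv ℝ L (jet n k q p.2 + p.1 • D p.2) (D p.2)) :=
      ((hL.continuous_fderiv (by simp)).comp
        ((hjet.continuous.comp continuous_snd).add
          (continuous_fst.smul (hDcont.comp continuous_snd)))).clm_apply
        (hDcont.comp continuous_snd)
    obtain ⟨M, hM⟩ := ((isCompact_Icc (a := (-1 : ℝ)) (b := 1)).prod hδc).exists_bound_of_continuousOn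
      hF'cont.continuousOn
    have bd_int : Integrable ((tsupport δ).indicator fun _ => M) := by
      rw [integrable_indicator_iff (isClosed_tsupport δ).measurableSet]
      exact integrableOn_const hδc.measure_lt_top.ne
    have h_bound : ∀ᵐ t : ℝ, ∀ s ∈ Metric.ball (0 : ℝ) 1,
        ‖fderiv ℝ L (jet n k q t + s • D t) (D t)‖ ≤ (tsupport δ).indicator (fun _ => M) t := by
      refine Filter.Eventually.of_forall fun t s hs => ?_
      by_cases ht : t ∈ tsupport δ
      · rw [Set.indicator_of_mem ht]
        have habs := abs_lt.1 (by simpa [Real.dist_eq] using hs)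
        exact hM (s, t) ⟨Set.mem_Icc.2 ⟨by linarith [habs.1], by linarith [habs.2]⟩, ht⟩
      · rw [Set.indicator_of_notMem ht, hD0 t ht]
        simp
    have h_diff : ∀ᵐ t : ℝ, ∀ s ∈ Metric.ball (0 : ℝ) 1,
        HasDerivAt (fun s => L (jet n k q t + s • D t))
          (fderiv ℝ L (jet n k q t + s • D t) (D t)) s := by
      refine Filter.Eventually.of_forall fun t s _ => ?_
      have h1 : HasDerivAt (fun s : ℝ => jet n k q t + s • D t) (D t) s := by
        simpa using ((hasDerivAt_id s).smul_const (D t)).const_add (jet n k q t)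
      exact (((hL.differentiable (by simp)) _).hasFDerivAt).comp_hasDerivAt s h1
    have hF_meas : ∀ᶠ s in nhds (0 : ℝ),
        AEStronglyMeasurable (fun t => L (jet n k q t + s • D t)) volume :=
      Filter.Eventually.of_forall fun s =>
        (hL.continuous.comp (hjet.continuous.add (hDcont.const_smul s))).aestronglyMeasurable
    have hF_int : Integrable (fun t => L (jet n k q t + (0 : ℝ) • D t)) := by
      simpa using hInt
    have hF'_meas : AEStronglyMeasurable
        (fun t => fderiv ℝ L (jet n k q t + (0 : ℝ) • D t) (D t)) volume :=
      (hF'cont.comp (continuous_const.prodMk continuous_id)).aestronglyMeasurable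
    have main := (hasDerivAt_integral_of_dominated_loc_of_deriv_le
      (F := fun s t => L (jet n k q t + s • D t))
      (F' := fun s t => fderiv ℝ L (jet n k q t + s • D t) (D t))
      (Metric.ball_mem_nhds 0 one_pos) hF_meas hF_int hF'_meas h_bound bd_int h_diff).2
    have hfun : (fun s : ℝ => ∫ t : ℝ, L (jet n k (fun u => q u + s • δ u) t))
        = fun s : ℝ => ∫ t : ℝ, L (jet n k q t + s • D t) := by
      funext s
      congr 1
      funext t
      rw [jet_add_smul n k hq hδ s t]
    -- integrability of the summands
    have hti : ∀ (i : Fin (k + 1)) (A : Fin n), Integrable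
        (fun t => iteratedDeriv i.1 (fun u => δ u A) t * pd n k L i A (jet n k q t)) :=
      fun i A => ((contDiff_iteratedDeriv_top (hδA A) i.1).continuous.mul
        (hΦ i A).continuous).integrable_of_hasCompactSupport
        (hasCompactSupport_iteratedDeriv (hδAc A) i.1).mul_right
    have hib : ∀ (i : Fin (k + 1)) (A : Fin n),
        (∫ t : ℝ, iteratedDeriv i.1 (fun u => δ u A) t * pd n k L i A (jet n k q t))
          = (-1 : ℝ) ^ (i : ℕ) *
            ∫ t : ℝ, iteratedDeriv i.1 (fun s => pd n k L i A (jet n k q s)) t * δ t A := by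
      intro i A
      calc (∫ t : ℝ, iteratedDeriv i.1 (fun u => δ u A) t * pd n k L i A (jet n k q t))
          = ∫ t : ℝ, (fun s => pd n k L i A (jet n k q s)) t
              * iteratedDeriv i.1 (fun u => δ u A) t := by
            congr 1; funext t; exact mul_comm _ _
        _ = _ := ibp_iter (hΦ i A) i.1 (hδA A) (hδAc A)
    have hterm_int : ∀ (A : Fin n) (i : Fin (k + 1)), Integrable
        (fun t => (-1 : ℝ) ^ (i : ℕ) *
          (iteratedDeriv i.1 (fun s => pd n k L i A (jet n k q s)) t * δ t A)) :=
      fun A i => (continuous_const.mul ((contDiff_iteratedDeriv_top (hΦ i A) i.1).continuous.mul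
        (hδA A).continuous)).integrable_of_hasCompactSupport
        ((hδAc A).mul_left.mul_left)
    have hELint : ∀ A : Fin n, Integrable (fun t => ELexpr n k L q t A * δ t A) :=
      fun A => ((hELc A).mul (hδA A).continuous).integrable_of_hasCompactSupport
        (hδAc A).mul_left
    have hval : (∫ t : ℝ, fderiv ℝ L (jet n k q t + (0 : ℝ) • D t) (D t))
        = ∫ t : ℝ, ∑ A : Fin n, ELexpr n k L q t A * δ t A := by
      calc (∫ t : ℝ, fderiv ℝ L (jet n k q t + (0 : ℝ) • D t) (D t))
          = ∫ t : ℝ, ∑ i : Fin (k + 1), ∑ A : Fin n,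
              iteratedDeriv i.1 (fun u => δ u A) t * pd n k L i A (jet n k q t) := by
            congr 1
            funext t
            rw [hD]
            simp only [zero_smul, add_zero]
            exact fderiv_decomp n k L _ _
        _ = ∑ i : Fin (k + 1), ∑ A : Fin n, ∫ t : ℝ,
              iteratedDeriv i.1 (fun u => δ u A) t * pd n k L i A (jet n k q t) := by
            rw [integral_finset_sum _ fun i _ => integrable_finset_sum _ fun A _ => hti i A]
            exact Finset.sum_congr rfl fun i _ => integral_finset_sum _ fun A _ => hti i A
        _ = ∑ i : Fin (k + 1), ∑ A : Fin n, (-1 : ℝ) ^ (i : ℕ) *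
              ∫ t : ℝ, iteratedDeriv i.1 (fun s => pd n k L i A (jet n k q s)) t * δ t A :=
            Finset.sum_congr rfl fun i _ => Finset.sum_congr rfl fun A _ => hib i A
        _ = ∑ A : Fin n, ∑ i : Fin (k + 1), (-1 : ℝ) ^ (i : ℕ) *
              ∫ t : ℝ, iteratedDeriv i.1 (fun s => pd n k L i A (jet n k q s)) t * δ t A :=
            Finset.sum_comm
        _ = ∑ A : Fin n, ∫ t : ℝ, ELexpr n k L q t A * δ t A := by
            refine Finset.sum_congr rfl fun A _ => ?_
            calc ∑ i : Fin (k + 1), (-1 : ℝ) ^ (i : ℕ) *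
                  ∫ t : ℝ, iteratedDeriv i.1 (fun s => pd n k L i A (jet n k q s)) t * δ t A
                = ∑ i : Fin (k + 1), ∫ t : ℝ, (-1 : ℝ) ^ (i : ℕ) *
                    (iteratedDeriv i.1 (fun s => pd n k L i A (jet n k q s)) t * δ t A) :=
                  Finset.sum_congr rfl fun i _ => (integral_const_mul _ _).symm
              _ = ∫ t : ℝ, ∑ i : Fin (k + 1), (-1 : ℝ) ^ (i : ℕ) *
                    (iteratedDeriv i.1 (fun s => pd n k L i A (jet n k q s)) t * δ t A) :=
                  (integral_finset_sum _ fun i _ => hterm_int A i).symm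
              _ = ∫ t : ℝ, ELexpr n k L q t A * δ t A := by
                  congr 1
                  funext t
                  unfold ELexpr
                  rw [Finset.sum_mul]
                  exact Finset.sum_congr rfl fun i _ => (mul_assoc _ _ _).symm
        _ = ∫ t : ℝ, ∑ A : Fin n, ELexpr n k L q t A * δ t A :=
            (integral_finset_sum _ fun A _ => hELint A).symm
    rw [hfun, ← hval]
    exact main
  refine ⟨key, ?_, ?_⟩
  · intro hcrit t A
    have hzero : ∀ g : ℝ → ℝ, ContDiff ℝ (⊤ : ℕ∞) g → HasCompactSupport g →
        ∫ s : ℝ, ELexpr n k L q s A * g s = 0 := by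
      intro g hg hgc
      set δ : ℝ → Fin n → ℝ := fun t => Pi.single A (g t) with hδdef
      have hδ : ContDiff ℝ (⊤ : ℕ∞) δ := by
        rw [hδdef]
        refine contDiff_pi.2 fun B => ?_
        by_cases h : B = A
        · simp only [Pi.single_apply, if_pos h]
          exact hg
        · simp only [Pi.single_apply, if_neg h]
          exact contDiff_const
      have hδc : HasCompactSupport δ := by
        refine hgc.mono' fun u hu => subset_tsupport g ?_
        simp only [Function.mem_support] at hu ⊢
        intro h0
        apply hu
        rw [hδdef]
        simp [h0]
      have h3 : (∫ s : ℝ, ∑ B : Fin n, ELexpr n k L q s B * δ s B) = 0 :=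
        (key δ hδ hδc).unique (hcrit δ hδ hδc)
      rw [← h3]
      congr 1
      funext s
      rw [hδdef]
      simp only [Pi.single_apply, mul_ite, mul_zero]
      rw [Finset.sum_ite_eq' Finset.univ A (fun B => ELexpr n k L q s B * g s)]
      simp
    exact fundamental_lemma (hELc A) hzero t
  · intro hEL δ hδ hδc
    have h1 := key δ hδ hδc
    have h0 : (∫ t : ℝ, ∑ A : Fin n, ELexpr n k L q t A * δ t A) = 0 := by
      have : ∀ t, (∑ A : Fin n, ELexpr n k L q t A * δ t A) = 0 := by
        intro t
        simp [hEL t]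
      simp [this]
    rwa [h0] at h1
end
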